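/- Let ρ ∈ (0,1), δ ∈ (0, ρ/8], m ≥ 700·log(1/δ)/(z·ρ²), suppose z/2 ≤ E_{x∼D}[φ(x)] ≤ 2z, and let S₁ and S₂ be two independent samples of m points each drawn i.i.d. from D, with empirical averages avg(S₁) = (1/m)∑_{x∈S₁} φ(x) and avg(S₂) = (1/m)∑_{x∈S₂} φ(x). Then P[|avg(S₁) − avg(S₂)| ≥ 3zρ/8] ≤ ρ/2. -/

import Mathlib

open MeasureTheory

open Real ProbabilityTheory

section Aux
variable {X : Type*} [MeasurableSpace X] (D : Measure X) [IsProbabilityMeasure D]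
  (φ : X → ℝ) (hφm : Measurable φ) (hφ0 : ∀ x, 0 ≤ φ x) (hφ1 : ∀ x, φ x ≤ 1)
include hφm hφ0 hφ1

lemma integrable_exp_mul_phi (s : ℝ) :
    Integrable (fun x => Real.exp (s * φ x)) D := by
  refine Integrable.mono' (integrable_const (Real.exp |s|))
    ((hφm.const_mul s).exp.aestronglyMeasurable) (ae_of_all _ fun x => ?_)
  rw [Real.norm_eq_abs, abs_of_pos (Real.exp_pos _)]
  refine Real.exp_le_exp.2 ?_
  calc s * φ x ≤ |s| * φ x := mul_le_mul_of_nonneg_right (le_abs_self s) (hφ0 x)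
    _ ≤ |s| * 1 := mul_le_mul_of_nonneg_left (hφ1 x) (abs_nonneg s)
    _ = |s| := mul_one _

lemma integrable_phi : Integrable φ D := by
  refine Integrable.mono' (integrable_const 1) hφm.aestronglyMeasurable (ae_of_all _ fun x => ?_)
  rw [Real.norm_eq_abs, abs_of_nonneg (hφ0 x)]; exact hφ1 x

omit hφm hφ0 hφ1 in
-- convexity: exp (s*x) ≤ 1 + x * (exp s - 1) for x ∈ [0,1]
lemma exp_mul_le_affine {s x : ℝ} (h0 : 0 ≤ x) (h1 : x ≤ 1) :
    Real.exp (s * x) ≤ 1 + x * (Real.exp s - 1) := by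
  have h := convexOn_exp.2 (Set.mem_univ (0:ℝ)) (Set.mem_univ s) (by linarith : (0:ℝ) ≤ 1 - x) h0
    (by ring)
  simp only [smul_eq_mul, mul_zero, zero_add, Real.exp_zero, mul_one] at h
  calc Real.exp (s * x) = Real.exp (x * s) := by rw [mul_comm]
    _ ≤ 1 - x + x * Real.exp s := h
    _ = 1 + x * (Real.exp s - 1) := by ring

omit hφm hφ0 hφ1 in
lemma exp_le_quad {x : ℝ} (hx : |x| ≤ 1) : Real.exp x ≤ 1 + x + x ^ 2 := by
  have h := Real.exp_bound hx (n := 3) (by norm_num)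
  have hsum : ∑ m ∈ Finset.range 3, x ^ m / m.factorial = 1 + x + x ^ 2 / 2 := by
    norm_num [Finset.sum_range_succ, Nat.factorial]
  rw [hsum] at h
  have h2 : Real.exp x - (1 + x + x ^ 2 / 2) ≤ |x| ^ 3 * (4 / (6 * 3)) := by
    have := abs_le.1 h
    simpa [Nat.factorial] using this.2
  have h3 : |x| ^ 3 ≤ x ^ 2 := by
    have : |x| ^ 3 = |x| ^ 2 * |x| := by ring
    rw [this, sq_abs]
    nlinarith [sq_nonneg x, abs_nonneg x]
  nlinarith

lemma integral_exp_mul_phi_le (s : ℝ) :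
    ∫ x, Real.exp (s * φ x) ∂D ≤ Real.exp ((∫ x, φ x ∂D) * (Real.exp s - 1)) := by
  have h1 : Integrable (fun x => Real.exp (s * φ x)) D := integrable_exp_mul_phi D φ hφm hφ0 hφ1 s
  have hφi : Integrable φ D := integrable_phi D φ hφm hφ0 hφ1
  have h2 : Integrable (fun x => 1 + φ x * (Real.exp s - 1)) D :=
    (integrable_const 1).add (hφi.mul_const _)
  calc ∫ x, Real.exp (s * φ x) ∂D ≤ ∫ x, (1 + φ x * (Real.exp s - 1)) ∂D :=
        integral_mono h1 h2 fun x => exp_mul_le_affine (hφ0 x) (hφ1 x)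
    _ = 1 + (∫ x, φ x ∂D) * (Real.exp s - 1) := by
        rw [integral_add (integrable_const 1) (hφi.mul_const _), integral_const,
          integral_mul_const]
        simp
    _ ≤ Real.exp ((∫ x, φ x ∂D) * (Real.exp s - 1)) := by
        have := Real.add_one_le_exp ((∫ x, φ x ∂D) * (Real.exp s - 1))
        linarith

omit hφm hφ0 hφ1 in
lemma mgf_sum_pi (m : ℕ) (s : ℝ) :
    mgf (fun S : Fin m → X => ∑ i, φ (S i)) (Measure.pi fun _ : Fin m => D) s
      = (∫ x, Real.exp (s * φ x) ∂D) ^ m := by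
  letI : MeasureSpace X := ⟨D⟩
  have h := MeasureTheory.integral_fintype_prod_eq_pow (𝕜 := ℝ) (ι := Fin m)
    (fun x => Real.exp (s * φ x)) (μ := D)
  rw [mgf]
  calc ∫ S : Fin m → X, Real.exp (s * ∑ i, φ (S i)) ∂(Measure.pi fun _ : Fin m => D)
      = ∫ S : Fin m → X, ∏ i, Real.exp (s * φ (S i)) ∂(Measure.pi fun _ : Fin m => D) := by
        congr 1; ext S
        rw [← Real.exp_sum, Finset.mul_sum]
    _ = (∫ x, Real.exp (s * φ x) ∂D) ^ m := by
        simpa [Fintype.card_fin] using h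

lemma mgf_sum_pi_le (m : ℕ) (s : ℝ) :
    mgf (fun S : Fin m → X => ∑ i, φ (S i)) (Measure.pi fun _ : Fin m => D) s
      ≤ Real.exp ((m : ℝ) * ((∫ x, φ x ∂D) * (Real.exp s - 1))) := by
  rw [mgf_sum_pi D φ]
  calc (∫ x, Real.exp (s * φ x) ∂D) ^ m
      ≤ (Real.exp ((∫ x, φ x ∂D) * (Real.exp s - 1))) ^ m :=
        pow_le_pow_left₀ (integral_nonneg fun x => (Real.exp_pos _).le)
          (integral_exp_mul_phi_le D φ hφm hφ0 hφ1 s) m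
    _ = Real.exp ((m : ℝ) * ((∫ x, φ x ∂D) * (Real.exp s - 1))) := by
        rw [← Real.exp_nat_mul]

lemma integrable_exp_mul_sum (m : ℕ) (s : ℝ) :
    Integrable (fun S : Fin m → X => Real.exp (s * ∑ i, φ (S i)))
      (Measure.pi fun _ : Fin m => D) := by
  have hYm : Measurable (fun S : Fin m → X => ∑ i, φ (S i)) :=
    Finset.measurable_sum _ fun i _ => hφm.comp (measurable_pi_apply i)
  refine Integrable.mono' (integrable_const (Real.exp (|s| * m)))
    ((hYm.const_mul s).exp.aestronglyMeasurable) (ae_of_all _ fun S => ?_)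
  rw [Real.norm_eq_abs, abs_of_pos (Real.exp_pos _)]
  refine Real.exp_le_exp.2 ?_
  have h0 : 0 ≤ ∑ i, φ (S i) := Finset.sum_nonneg fun i _ => hφ0 _
  have h1 : ∑ i, φ (S i) ≤ (m : ℝ) := by
    calc ∑ i, φ (S i) ≤ ∑ _i : Fin m, (1 : ℝ) := Finset.sum_le_sum fun i _ => hφ1 _
      _ = m := by simp
  calc s * ∑ i, φ (S i) ≤ |s| * ∑ i, φ (S i) :=
        mul_le_mul_of_nonneg_right (le_abs_self s) h0
    _ ≤ |s| * m := mul_le_mul_of_nonneg_left h1 (abs_nonneg s)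

lemma pi_tail_ge (m : ℕ) (s ε : ℝ) (hs : 0 ≤ s) :
    ((Measure.pi fun _ : Fin m => D) {S | ε ≤ ∑ i, φ (S i)}).toReal
      ≤ Real.exp (-s * ε + (m : ℝ) * ((∫ x, φ x ∂D) * (Real.exp s - 1))) := by
  have h := measure_ge_le_exp_mul_mgf (X := fun S : Fin m → X => ∑ i, φ (S i))
    (μ := Measure.pi fun _ : Fin m => D) ε hs (integrable_exp_mul_sum D φ hφm hφ0 hφ1 m s)
  calc ((Measure.pi fun _ : Fin m => D) {S | ε ≤ ∑ i, φ (S i)}).toReal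
      ≤ Real.exp (-s * ε) * mgf (fun S : Fin m → X => ∑ i, φ (S i))
        (Measure.pi fun _ : Fin m => D) s := h
    _ ≤ Real.exp (-s * ε) * Real.exp ((m : ℝ) * ((∫ x, φ x ∂D) * (Real.exp s - 1))) := by
        exact mul_le_mul_of_nonneg_left (mgf_sum_pi_le D φ hφm hφ0 hφ1 m s) (Real.exp_pos _).le
    _ = Real.exp (-s * ε + (m : ℝ) * ((∫ x, φ x ∂D) * (Real.exp s - 1))) :=
        (Real.exp_add _ _).symm

lemma pi_tail_le (m : ℕ) (s ε : ℝ) (hs : 0 ≤ s) :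
    ((Measure.pi fun _ : Fin m => D) {S | ∑ i, φ (S i) ≤ ε}).toReal
      ≤ Real.exp (s * ε + (m : ℝ) * ((∫ x, φ x ∂D) * (Real.exp (-s) - 1))) := by
  have h := measure_le_le_exp_mul_mgf (X := fun S : Fin m → X => ∑ i, φ (S i))
    (μ := Measure.pi fun _ : Fin m => D) ε (neg_nonpos.2 hs)
    (integrable_exp_mul_sum D φ hφm hφ0 hφ1 m (-s))
  calc ((Measure.pi fun _ : Fin m => D) {S | ∑ i, φ (S i) ≤ ε}).toReal
      ≤ Real.exp (-(-s) * ε) * mgf (fun S : Fin m → X => ∑ i, φ (S i))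
        (Measure.pi fun _ : Fin m => D) (-s) := h
    _ ≤ Real.exp (s * ε) * Real.exp ((m : ℝ) * ((∫ x, φ x ∂D) * (Real.exp (-s) - 1))) := by
        rw [neg_neg]
        exact mul_le_mul_of_nonneg_left (mgf_sum_pi_le D φ hφm hφ0 hφ1 m (-s)) (Real.exp_pos _).le
    _ = Real.exp (s * ε + (m : ℝ) * ((∫ x, φ x ∂D) * (Real.exp (-s) - 1))) :=
        (Real.exp_add _ _).symm

end Aux

/-- If `z/2 ≤ E_{x∼D}[φ(x)] ≤ 2z` and `m ≥ 700·log(1/δ)/(z·ρ²)`, then for two independent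
i.i.d. samples `S₁, S₂` of size `m` from `D`,
`P[|avg(S₁) − avg(S₂)| ≥ 3zρ/8] ≤ ρ/2`. -/
theorem rThreshold_estimates_close {X : Type*} [MeasurableSpace X]
    (D : Measure X) [IsProbabilityMeasure D]
    (φ : X → ℝ) (hφm : Measurable φ) (hφ0 : ∀ x, 0 ≤ φ x) (hφ1 : ∀ x, φ x ≤ 1)
    (z : ℝ) (hz : z ∈ Set.Ioo (0 : ℝ) 1) (m : ℕ) (hm : 0 < m)
    (ρ : ℝ) (hρ : ρ ∈ Set.Ioo (0 : ℝ) 1) (δ : ℝ) (hδ : δ ∈ Set.Ioc (0 : ℝ) (ρ / 8))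
    (hsamp : 700 * Real.log (1 / δ) / (z * ρ ^ 2) ≤ (m : ℝ))
    (hElo : z / 2 ≤ ∫ x, φ x ∂D) (hEhi : ∫ x, φ x ∂D ≤ 2 * z) :
    ((Measure.pi fun _ : Fin m => D).prod (Measure.pi fun _ : Fin m => D))
      {p | 3 * z * ρ / 8 ≤ |(m : ℝ)⁻¹ * (∑ i, φ (p.1 i)) - (m : ℝ)⁻¹ * ∑ i, φ (p.2 i)|}
      ≤ ENNReal.ofReal (ρ / 2) := by
  obtain ⟨hz0, hz1⟩ := hz
  obtain ⟨hρ0, hρ1⟩ := hρ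
  obtain ⟨hδ0, hδρ⟩ := hδ
  have hm0 : (0 : ℝ) < m := Nat.cast_pos.2 hm
  set μE : ℝ := ∫ x, φ x ∂D with hμE
  have hμ0 : 0 < μE := lt_of_lt_of_le (by positivity) hElo
  set s : ℝ := 3 * ρ / 64 with hs_def
  set c : ℝ := 3 * z * ρ / 16 with hc_def
  have hs0 : 0 ≤ s := by positivity
  have hc0 : 0 < c := by rw [hc_def]; positivity
  have hs1 : |s| ≤ 1 := by rw [abs_of_nonneg hs0, hs_def]; linarith
  have hcs : c = 4 * z * s := by rw [hc_def, hs_def]; ring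
  set L : ℝ := Real.log (1 / δ) with hL_def
  have hδ1 : δ ≤ 1 := le_trans hδρ (by linarith)
  have hL0 : 0 ≤ L := Real.log_nonneg (by rw [le_div_iff₀ hδ0]; linarith)
  have hmz : 700 * L ≤ (m : ℝ) * (z * ρ ^ 2) := by
    rw [div_le_iff₀ (by positivity)] at hsamp
    linarith
  -- the common exponential bound
  have hkey : Real.exp (-(2 * (m : ℝ) * z * s ^ 2)) ≤ ρ / 8 := by
    have h1 : -(2 * (m : ℝ) * z * s ^ 2) ≤ -3 * L := by
      have h0 : 2 * (m : ℝ) * z * s ^ 2 = 9 * ((m : ℝ) * (z * ρ ^ 2)) / 2048 := by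
        rw [hs_def]; ring
      linarith
    have h2 : Real.exp (-3 * L) = δ ^ 3 := by
      rw [hL_def, one_div, Real.log_inv]
      have h3 : (-3 : ℝ) * -Real.log δ = ((3:ℕ) : ℝ) * Real.log δ := by push_cast; ring
      rw [h3, Real.exp_nat_mul, Real.exp_log hδ0]
    calc Real.exp (-(2 * (m : ℝ) * z * s ^ 2)) ≤ Real.exp (-3 * L) := Real.exp_le_exp.2 h1
      _ = δ ^ 3 := h2
      _ ≤ δ := pow_le_of_le_one hδ0.le hδ1 (by norm_num)
      _ ≤ ρ / 8 := hδρ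
  set Pm : Measure (Fin m → X) := Measure.pi fun _ : Fin m => D with hPm
  -- tail bounds for a single sample
  have htail_up : Pm {S | (m : ℝ) * (μE + c) ≤ ∑ i, φ (S i)} ≤ ENNReal.ofReal (ρ / 8) := by
    rw [ENNReal.le_ofReal_iff_toReal_le (measure_ne_top _ _) (by positivity)]
    refine le_trans (pi_tail_ge D φ hφm hφ0 hφ1 m s ((m : ℝ) * (μE + c)) hs0) (le_trans ?_ hkey)
    refine Real.exp_le_exp.2 ?_
    rw [← hμE, hcs]
    have hes : Real.exp s - 1 ≤ s + s ^ 2 := by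
      have := exp_le_quad hs1; linarith
    have h1 : (m : ℝ) * (μE * (Real.exp s - 1)) ≤ (m : ℝ) * (μE * (s + s ^ 2)) :=
      mul_le_mul_of_nonneg_left (mul_le_mul_of_nonneg_left hes hμ0.le) hm0.le
    have h2 : μE * ((m : ℝ) * s ^ 2) ≤ 2 * z * ((m : ℝ) * s ^ 2) :=
      mul_le_mul_of_nonneg_right hEhi (mul_nonneg hm0.le (sq_nonneg s))
    nlinarith [h1, h2]
  have htail_lo : Pm {S | ∑ i, φ (S i) ≤ (m : ℝ) * (μE - c)} ≤ ENNReal.ofReal (ρ / 8) := by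
    rw [ENNReal.le_ofReal_iff_toReal_le (measure_ne_top _ _) (by positivity)]
    refine le_trans (pi_tail_le D φ hφm hφ0 hφ1 m s ((m : ℝ) * (μE - c)) hs0) (le_trans ?_ hkey)
    refine Real.exp_le_exp.2 ?_
    rw [← hμE, hcs]
    have hes : Real.exp (-s) - 1 ≤ -s + s ^ 2 := by
      have := exp_le_quad (x := -s) (by rwa [abs_neg]); nlinarith
    have h1 : (m : ℝ) * (μE * (Real.exp (-s) - 1)) ≤ (m : ℝ) * (μE * (-s + s ^ 2)) :=
      mul_le_mul_of_nonneg_left (mul_le_mul_of_nonneg_left hes hμ0.le) hm0.le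
    have h2 : μE * ((m : ℝ) * s ^ 2) ≤ 2 * z * ((m : ℝ) * s ^ 2) :=
      mul_le_mul_of_nonneg_right hEhi (mul_nonneg hm0.le (sq_nonneg s))
    nlinarith [h1, h2]
  -- decompose the event
  set A1 : Set ((Fin m → X) × (Fin m → X)) :=
    {p | (m : ℝ) * (μE + c) ≤ ∑ i, φ (p.1 i)} with hA1
  set A2 : Set ((Fin m → X) × (Fin m → X)) :=
    {p | ∑ i, φ (p.1 i) ≤ (m : ℝ) * (μE - c)} with hA2
  set A3 : Set ((Fin m → X) × (Fin m → X)) :=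
    {p | (m : ℝ) * (μE + c) ≤ ∑ i, φ (p.2 i)} with hA3
  set A4 : Set ((Fin m → X) × (Fin m → X)) :=
    {p | ∑ i, φ (p.2 i) ≤ (m : ℝ) * (μE - c)} with hA4
  have hsub : {p : (Fin m → X) × (Fin m → X) |
      3 * z * ρ / 8 ≤ |(m : ℝ)⁻¹ * (∑ i, φ (p.1 i)) - (m : ℝ)⁻¹ * ∑ i, φ (p.2 i)|}
      ⊆ A1 ∪ A2 ∪ A3 ∪ A4 := by
    intro p hp
    simp only [Set.mem_setOf_eq] at hp
    by_contra hcon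
    simp only [hA1, hA2, hA3, hA4, Set.mem_union, Set.mem_setOf_eq, not_or, not_le] at hcon
    obtain ⟨⟨⟨h1, h2⟩, h3⟩, h4⟩ := hcon
    set a : ℝ := ∑ i, φ (p.1 i)
    set b : ℝ := ∑ i, φ (p.2 i)
    have habs : |(m : ℝ)⁻¹ * a - (m : ℝ)⁻¹ * b| = (m : ℝ)⁻¹ * |a - b| := by
      rw [← mul_sub, abs_mul, abs_of_pos (inv_pos.2 hm0)]
    have hlt : |a - b| < 2 * ((m : ℝ) * c) := by
      rw [abs_sub_lt_iff]
      exact ⟨by linarith only [h1, h4], by linarith only [h3, h2]⟩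
    have h5 : (m : ℝ)⁻¹ * |a - b| < (m : ℝ)⁻¹ * (2 * ((m : ℝ) * c)) :=
      mul_lt_mul_of_pos_left hlt (inv_pos.2 hm0)
    have h6 : (m : ℝ)⁻¹ * (2 * ((m : ℝ) * c)) = 2 * c := by
      field_simp
    rw [habs] at hp
    rw [h6] at h5
    have : 2 * c = 3 * z * ρ / 8 := by rw [hc_def]; ring
    linarith
  -- measures of the four pieces
  have hP1 : (Pm.prod Pm) A1 ≤ ENNReal.ofReal (ρ / 8) := by
    have heq : A1 = {S : Fin m → X | (m : ℝ) * (μE + c) ≤ ∑ i, φ (S i)} ×ˢ Set.univ := by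
      ext p; simp [hA1, Set.mem_prod]
    rw [heq, Measure.prod_prod, measure_univ, mul_one]
    exact htail_up
  have hP2 : (Pm.prod Pm) A2 ≤ ENNReal.ofReal (ρ / 8) := by
    have heq : A2 = {S : Fin m → X | ∑ i, φ (S i) ≤ (m : ℝ) * (μE - c)} ×ˢ Set.univ := by
      ext p; simp [hA2, Set.mem_prod]
    rw [heq, Measure.prod_prod, measure_univ, mul_one]
    exact htail_lo
  have hP3 : (Pm.prod Pm) A3 ≤ ENNReal.ofReal (ρ / 8) := by
    have heq : A3 = Set.univ ×ˢ {S : Fin m → X | (m : ℝ) * (μE + c) ≤ ∑ i, φ (S i)} := by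
      ext p; simp [hA3, Set.mem_prod]
    rw [heq, Measure.prod_prod, measure_univ, one_mul]
    exact htail_up
  have hP4 : (Pm.prod Pm) A4 ≤ ENNReal.ofReal (ρ / 8) := by
    have heq : A4 = Set.univ ×ˢ {S : Fin m → X | ∑ i, φ (S i) ≤ (m : ℝ) * (μE - c)} := by
      ext p; simp [hA4, Set.mem_prod]
    rw [heq, Measure.prod_prod, measure_univ, one_mul]
    exact htail_lo
  calc (Pm.prod Pm) {p | 3 * z * ρ / 8 ≤
        |(m : ℝ)⁻¹ * (∑ i, φ (p.1 i)) - (m : ℝ)⁻¹ * ∑ i, φ (p.2 i)|}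
      ≤ (Pm.prod Pm) (A1 ∪ A2 ∪ A3 ∪ A4) := measure_mono hsub
    _ ≤ (Pm.prod Pm) A1 + (Pm.prod Pm) A2 + (Pm.prod Pm) A3 + (Pm.prod Pm) A4 := by
        refine le_trans (measure_union_le _ _) ?_
        refine add_le_add (le_trans (measure_union_le _ _) ?_) le_rfl
        exact add_le_add (measure_union_le _ _) le_rfl
    _ ≤ ENNReal.ofReal (ρ / 8) + ENNReal.ofReal (ρ / 8) + ENNReal.ofReal (ρ / 8)
        + ENNReal.ofReal (ρ / 8) := by
        exact add_le_add (add_le_add (add_le_add hP1 hP2) hP3) hP4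
    _ = ENNReal.ofReal (ρ / 2) := by
        rw [← ENNReal.ofReal_add (by positivity) (by positivity),
          ← ENNReal.ofReal_add (by positivity) (by positivity),
          ← ENNReal.ofReal_add (by positivity) (by positivity)]
        congr 1
        ring
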